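/- For every t >= 1, each term of the binomial distribution Bin(t, 1/2) has probability mass at most sqrt(2/(pi*t)); i.e., for all j with 0 <= j <= t, C(t,j)/2^t <= sqrt(2/(pi*t)). -/

import Mathlib

open Real Stirling Nat

lemma sqrt_pi_le_stirlingSeq (n : ℕ) (hn : 1 ≤ n) : Real.sqrt π ≤ stirlingSeq n := by
  obtain ⟨m, rfl⟩ := Nat.exists_eq_add_of_le hn
  have h := stirlingSeq'_antitone.le_of_tendsto
    (tendsto_stirlingSeq_sqrt_pi.comp (Filter.tendsto_add_atTop_nat 1)) m
  simp only [Function.comp] at h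
  convert h using 2
  · rfl
  omega

lemma stirling_two_mul_le (n : ℕ) (hn : 1 ≤ n) : stirlingSeq (2 * n) ≤ stirlingSeq n := by
  obtain ⟨m, rfl⟩ := Nat.exists_eq_add_of_le hn
  have h := stirlingSeq'_antitone (show m ≤ 2 * m + 1 by omega)
  simp only [Function.comp] at h
  convert h using 2
  · rfl
  all_goals omega

lemma factorial_eq (n : ℕ) (hn : 1 ≤ n) :
    (n ! : ℝ) = stirlingSeq n * (Real.sqrt (2 * n) * ((n : ℝ) / Real.exp 1) ^ n) := by
  rw [stirlingSeq, div_mul_cancel₀]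
  have : (0:ℝ) < n := by exact_mod_cast hn
  positivity

lemma centralBinom_le (n : ℕ) (hn : 1 ≤ n) :
    (Nat.centralBinom n : ℝ) ≤ 4 ^ n / Real.sqrt (π * n) := by
  have hn' : (0:ℝ) < n := by exact_mod_cast hn
  have hπ : (0:ℝ) < Real.sqrt π := Real.sqrt_pos.2 Real.pi_pos
  have hs : Real.sqrt π ≤ stirlingSeq n := sqrt_pi_le_stirlingSeq n hn
  have hs2 : stirlingSeq (2 * n) ≤ stirlingSeq n := stirling_two_mul_le n hn
  have hsn : (0:ℝ) < stirlingSeq n := lt_of_lt_of_le hπ hs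
  have knat : (2 * n).choose n * (n ! * n !) = (2 * n)! := by
    have h := Nat.choose_mul_factorial_mul_factorial (Nat.le_mul_of_pos_left n two_pos)
    rwa [show 2 * n - n = n by omega, mul_assoc] at h
  have key : (Nat.centralBinom n : ℝ) * ((n ! : ℝ) * (n ! : ℝ)) = ((2 * n)! : ℝ) := by
    rw [Nat.centralBinom]; exact_mod_cast knat
  have e1 := factorial_eq (2 * n) (by omega)
  have e2 := factorial_eq n hn
  push_cast at e1
  have hsq : Real.sqrt (2 * (n:ℝ)) ^ 2 = 2 * n := Real.sq_sqrt (by positivity)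
  have hsqn : Real.sqrt (n:ℝ) ^ 2 = n := Real.sq_sqrt (by positivity)
  have hsqnpos : (0:ℝ) < Real.sqrt n := Real.sqrt_pos.2 hn'
  have h4n : Real.sqrt (2 * (2 * (n:ℝ))) = 2 * Real.sqrt n := by
    rw [show 2 * (2 * (n:ℝ)) = 4 * n by ring, Real.sqrt_mul (by norm_num),
      show (4:ℝ) = 2 ^ 2 by norm_num, Real.sqrt_sq (by norm_num)]
  have hpow : ((2 * (n:ℝ)) / Real.exp 1) ^ (2 * n) = 4 ^ n * ((n:ℝ) / Real.exp 1) ^ (2 * n) := by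
    rw [show (2 * (n:ℝ)) / Real.exp 1 = 2 * ((n:ℝ) / Real.exp 1) by ring, mul_pow, pow_mul]
    norm_num
  have hpow2 : (((n:ℝ) / Real.exp 1) ^ n) ^ 2 = ((n:ℝ) / Real.exp 1) ^ (2 * n) := by
    rw [← pow_mul]; ring_nf
  have hppos : (0:ℝ) < ((n:ℝ) / Real.exp 1) ^ (2 * n) := by positivity
  rw [e1, e2, h4n, hpow] at key
  have hA : stirlingSeq n * (Real.sqrt (2 * (n:ℝ)) * ((n:ℝ) / Real.exp 1) ^ n)
        * (stirlingSeq n * (Real.sqrt (2 * (n:ℝ)) * ((n:ℝ) / Real.exp 1) ^ n))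
      = stirlingSeq n ^ 2 * (2 * n) * ((n:ℝ) / Real.exp 1) ^ (2 * n) := by
    linear_combination (stirlingSeq n ^ 2 * (((n:ℝ) / Real.exp 1) ^ n) ^ 2) * hsq
      + (stirlingSeq n ^ 2 * (2 * (n:ℝ))) * hpow2
  rw [hA] at key
  -- key : CB * (s n ^ 2 * (2 n) * p) = s (2n) * (2 √n * (4^n * p))
  have eq : (Nat.centralBinom n : ℝ) * (stirlingSeq n ^ 2 * n)
      = stirlingSeq (2 * n) * Real.sqrt n * 4 ^ n := by
    apply mul_right_cancel₀ (ne_of_gt (show (0:ℝ) < 2 * ((n:ℝ) / Real.exp 1) ^ (2 * n) by positivity))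
    linear_combination key
  have hCB : (Nat.centralBinom n : ℝ)
      = stirlingSeq (2 * n) * 4 ^ n / (stirlingSeq n ^ 2 * Real.sqrt n) := by
    rw [eq_div_iff (mul_pos (pow_pos hsn 2) hsqnpos).ne']
    apply mul_right_cancel₀ (ne_of_gt hsqnpos)
    linear_combination eq + (Nat.centralBinom n : ℝ) * stirlingSeq n ^ 2 * hsqn
  have hfin : stirlingSeq (2 * n) * Real.sqrt π ≤ stirlingSeq n ^ 2 := by
    nlinarith [hs, hs2, hπ]
  calc (Nat.centralBinom n : ℝ)
      = stirlingSeq (2 * n) * 4 ^ n / (stirlingSeq n ^ 2 * Real.sqrt n) := hCB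
    _ ≤ 4 ^ n / (Real.sqrt π * Real.sqrt n) := by
        rw [div_le_div_iff₀ (mul_pos (pow_pos hsn 2) hsqnpos) (mul_pos hπ hsqnpos)]
        nlinarith [mul_le_mul_of_nonneg_right hfin
          (show (0:ℝ) ≤ 4 ^ n * Real.sqrt n by positivity)]
    _ = 4 ^ n / Real.sqrt (π * n) := by rw [Real.sqrt_mul Real.pi_pos.le]

/-- Each term of Bin(t, 1/2) has mass at most √(2/(π t)). -/
theorem binomial_term_le (t j : ℕ) (ht : 1 ≤ t) (hj : j ≤ t) :
    (t.choose j : ℝ) / 2 ^ t ≤ Real.sqrt (2 / (Real.pi * t)) := by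
  have hchoose := Nat.choose_le_middle j t
  have hπ : (0:ℝ) < π := Real.pi_pos
  rcases Nat.even_or_odd t with ⟨n, rfl⟩ | ⟨n, rfl⟩
  · -- t = n + n
    have hn : 1 ≤ n := by omega
    have hn' : (0:ℝ) < n := by exact_mod_cast hn
    have hmid : (n + n).choose ((n + n) / 2) = Nat.centralBinom n := by
      rw [Nat.centralBinom, show (n + n) / 2 = n by omega, two_mul]
    have h1 : ((n + n).choose j : ℝ) ≤ Nat.centralBinom n := by
      exact_mod_cast hmid ▸ hchoose
    have h2 := centralBinom_le n hn
    have hp4 : (2:ℝ) ^ (n + n) = 4 ^ n := by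
      rw [show n + n = 2 * n by ring, pow_mul]; norm_num
    rw [hp4, div_le_iff₀ (by positivity)]
    have hrhs : Real.sqrt (2 / (π * ((n:ℝ) + n))) = 1 / Real.sqrt (π * n) := by
      rw [show (2:ℝ) / (π * ((n:ℝ) + n)) = (π * n)⁻¹ by field_simp; ring,
        Real.sqrt_inv, one_div]
    push_cast
    rw [hrhs]
    have hsp : (0:ℝ) < Real.sqrt (π * n) := Real.sqrt_pos.2 (by positivity)
    calc ((n + n).choose j : ℝ) ≤ (Nat.centralBinom n : ℝ) := h1
      _ ≤ 4 ^ n / Real.sqrt (π * n) := h2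
      _ = 1 / Real.sqrt (π * n) * 4 ^ n := by ring
  · -- t = 2 * n + 1
    have hmid : (2 * n + 1).choose ((2 * n + 1) / 2) = (2 * n + 1).choose n := by
      rw [show (2 * n + 1) / 2 = n by omega]
    have hdouble : 2 * (2 * n + 1).choose n = Nat.centralBinom (n + 1) := by
      have hsymm : (2 * n + 1).choose n = (2 * n + 1).choose (n + 1) := by
        have := Nat.choose_symm (show n + 1 ≤ 2 * n + 1 by omega)
        rwa [show 2 * n + 1 - (n + 1) = n by omega] at this
      rw [Nat.centralBinom, show 2 * (n + 1) = (2 * n + 1) + 1 by ring,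
        Nat.choose_succ_succ, two_mul, hsymm]
    have h1 : ((2 * n + 1).choose j : ℝ) ≤ (2 * n + 1).choose n := by
      exact_mod_cast hmid ▸ hchoose
    have h2 := centralBinom_le (n + 1) (by omega)
    have hn1 : (0:ℝ) < (n:ℝ) + 1 := by positivity
    have hcb : ((2 * n + 1).choose n : ℝ) = (Nat.centralBinom (n + 1) : ℝ) / 2 := by
      rw [eq_div_iff (two_ne_zero)]
      exact_mod_cast (mul_comm 2 ((2 * n + 1).choose n)) ▸ congrArg (Nat.cast (R := ℝ)) hdouble
    have hp4 : (2:ℝ) ^ (2 * n + 1) * 2 = 4 ^ (n + 1) := by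
      rw [show (4:ℝ) = 2 ^ 2 by norm_num, ← pow_mul, ← pow_succ]
      ring_nf
    have hsp1 : (0:ℝ) < Real.sqrt (π * ((n:ℝ) + 1)) := Real.sqrt_pos.2 (by positivity)
    have hstep : ((2 * n + 1).choose j : ℝ) / 2 ^ (2 * n + 1) ≤ 1 / Real.sqrt (π * ((n:ℝ) + 1)) := by
      rw [div_le_iff₀ (by positivity)]
      calc ((2 * n + 1).choose j : ℝ) ≤ ((2 * n + 1).choose n : ℝ) := h1
        _ = (Nat.centralBinom (n + 1) : ℝ) / 2 := hcb
        _ ≤ (4 ^ (n + 1) / Real.sqrt (π * ((n:ℝ) + 1))) / 2 := by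
            gcongr
            push_cast at h2 ⊢; exact h2
        _ = 1 / Real.sqrt (π * ((n:ℝ) + 1)) * 2 ^ (2 * n + 1) := by
            rw [← hp4]; ring
    refine hstep.trans ?_
    have hle : (π * ((n:ℝ) + 1))⁻¹ ≤ 2 / (π * ((2 * n : ℕ) + 1 : ℝ)) := by
      rw [inv_eq_one_div, div_le_div_iff₀ (by positivity) (by positivity)]
      push_cast
      nlinarith [hπ, (show (0:ℝ) ≤ n by positivity)]
    calc 1 / Real.sqrt (π * ((n:ℝ) + 1)) = Real.sqrt ((π * ((n:ℝ) + 1))⁻¹) := by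
          rw [Real.sqrt_inv, one_div]
      _ ≤ Real.sqrt (2 / (π * ((2 * n : ℕ) + 1 : ℝ))) := Real.sqrt_le_sqrt hle
      _ = Real.sqrt (2 / (π * ((2 * n + 1 : ℕ) : ℝ))) := by push_cast; ring_nf
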